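/- Let n > 0, d > 0, and let α = 2/(√(1 + 4/(n·d²)) - 1). Define n₁^→ = n and suppose n_j^→ ≥ n + n_{j-1}^→/(1 + n_{j-1}^→·d²) for j ≥ 2, with equality allowed. Then for every j ≥ 1, n_j^→ ≥ n·(1 + ((1+α)^{2j-1} - 1 - α)/(α·(1+α)^{2j-1} + α)). -/

import Mathlib

lemma mono_aux {x y c : ℝ} (hc : 0 ≤ c) (hy : 0 ≤ y) (hxy : y ≤ x) :
    y / (1 + y * c) ≤ x / (1 + x * c) := by
  have h1 : 0 < 1 + y * c := by nlinarith
  have h2 : 0 < 1 + x * c := by nlinarith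
  rw [div_le_div_iff₀ h1 h2]; nlinarith

lemma step_aux {n α t : ℝ} (hn : 0 < n) (hα : 0 < α) (ht : 1 ≤ t) :
    n + (n * (1 + (t - 1 - α) / (α * t + α))) /
        (1 + (n * (1 + (t - 1 - α) / (α * t + α))) * (α ^ 2 / ((α + 1) * n)))
      = n * (1 + ((1 + α) ^ 2 * t - 1 - α) / (α * (1 + α) ^ 2 * t + α)) := by
  have h1 : α * t + α > 0 := by nlinarith
  have h2 : α * (1 + α) ^ 2 * t + α > 0 := by positivity
  have h3 : (α + 1) > 0 := by linarith
  have ha : n * (1 + (t - 1 - α) / (α * t + α)) = n * ((α + 1) * t - 1) / (α * (t + 1)) := by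
    field_simp; ring
  rw [ha]
  have h4 : α * (t + 1) > 0 := by nlinarith
  have h5 : (α + 1) * t - 1 > 0 := by nlinarith
  have h6 : 1 + n * ((α + 1) * t - 1) / (α * (t + 1)) * (α ^ 2 / ((α + 1) * n)) > 0 := by
    have : n * ((α + 1) * t - 1) / (α * (t + 1)) * (α ^ 2 / ((α + 1) * n)) > 0 := by positivity
    linarith
  field_simp
  ring

theorem forward_ess_lower_bound (n d : ℝ) (hn : 0 < n) (hd : 0 < d)
    (seq : ℕ → ℝ) (h1 : seq 1 = n)
    (hrec : ∀ j : ℕ, 2 ≤ j → seq j ≥ n + seq (j - 1) / (1 + seq (j - 1) * d ^ 2)) :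
    ∀ j : ℕ, 1 ≤ j →
      seq j ≥ n * (1 +
        ((1 + 2 / (Real.sqrt (1 + 4 / (n * d ^ 2)) - 1)) ^ (2 * j - 1) - 1 -
            2 / (Real.sqrt (1 + 4 / (n * d ^ 2)) - 1)) /
          (2 / (Real.sqrt (1 + 4 / (n * d ^ 2)) - 1) *
              (1 + 2 / (Real.sqrt (1 + 4 / (n * d ^ 2)) - 1)) ^ (2 * j - 1) +
            2 / (Real.sqrt (1 + 4 / (n * d ^ 2)) - 1))) := by
  have hnd : 0 < n * d ^ 2 := by positivity
  set s := Real.sqrt (1 + 4 / (n * d ^ 2)) with hs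
  have hs2 : s ^ 2 = 1 + 4 / (n * d ^ 2) := Real.sq_sqrt (by positivity)
  have hs1 : (1 : ℝ) < s := by
    have h0 : 0 ≤ s := Real.sqrt_nonneg _
    have h4 : 0 < 4 / (n * d ^ 2) := by positivity
    nlinarith
  set α := 2 / (s - 1) with hαdef
  have hα : 0 < α := by
    apply div_pos (by norm_num); linarith
  have hc : d ^ 2 = α ^ 2 / ((α + 1) * n) := by
    have h1' : s - 1 ≠ 0 := by linarith
    have h2' : (α + 1) * n ≠ 0 := by positivity
    rw [eq_div_iff h2', hαdef]
    have key : (s ^ 2 - 1) * (n * d ^ 2) = 4 := by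
      have hnd' : n * d ^ 2 ≠ 0 := ne_of_gt hnd
      field_simp at hs2; nlinarith [hs2]
    field_simp
    linear_combination key
  intro j hj
  induction j, hj using Nat.le_induction with
  | base =>
    norm_num
    rw [h1]
  | succ j hj ih =>
    set t := (1 + α) ^ (2 * j - 1) with htdef
    have ht : 1 ≤ t := one_le_pow₀ (by linarith)
    have hexp : 2 * (j + 1) - 1 = (2 * j - 1) + 2 := by omega
    have hpow : (1 + α) ^ (2 * (j + 1) - 1) = (1 + α) ^ 2 * t := by
      rw [hexp, pow_add]; ring
    rw [hpow]
    set a := n * (1 + (t - 1 - α) / (α * t + α)) with hadef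
    have hden : 0 < α * t + α := by nlinarith
    have ha0 : 0 ≤ a := by
      have : -(1:ℝ) ≤ (t - 1 - α) / (α * t + α) := by
        rw [le_div_iff₀ hden]; nlinarith
      nlinarith
    have hseq : seq j ≥ a := ih
    have hrec' := hrec (j + 1) (by omega)
    simp only [Nat.add_sub_cancel] at hrec'
    have hmono : a / (1 + a * d ^ 2) ≤ seq j / (1 + seq j * d ^ 2) :=
      mono_aux (by positivity) ha0 hseq
    have hstep : n + a / (1 + a * d ^ 2)
        = n * (1 + ((1 + α) ^ 2 * t - 1 - α) / (α * (1 + α) ^ 2 * t + α)) := by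
      rw [hadef, hc]
      exact step_aux hn hα ht
    have hstep2 : n + a / (1 + a * d ^ 2)
        = n * (1 + ((1 + α) ^ 2 * t - 1 - α) / (α * ((1 + α) ^ 2 * t) + α)) := by
      rw [hstep]; ring
    linarith [hrec', hmono, hstep2.symm.le]
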